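/- Every chainable metric continuum has span zero. -/

import Mathlib

open Metric Set Function

def IsSubcontinuum {X : Type*} [TopologicalSpace X] (A : Set X) : Prop :=
  IsCompact A ∧ IsConnected A

def Chainable (X : Type*) [MetricSpace X] : Prop :=
  ∀ ε : ℝ, 0 < ε → ∃ n : ℕ, ∃ C : Fin (n + 1) → Set X,
    (∀ i, IsOpen (C i)) ∧ (⋃ i, C i) = Set.univ ∧
    (∀ i, Metric.diam (C i) < ε) ∧
    (∀ i j, (C i ∩ C j).Nonempty ↔ |(i : ℤ) - (j : ℤ)| ≤ 1)

def SetUnicoherent {X : Type*} [TopologicalSpace X] (H : Set X) : Prop :=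
  ∀ A B : Set X, IsSubcontinuum A → IsSubcontinuum B → A ∪ B = H → IsConnected (A ∩ B)

def Unicoherent (X : Type*) [TopologicalSpace X] : Prop :=
  ∀ A B : Set X, IsSubcontinuum A → IsSubcontinuum B → A ∪ B = Set.univ → IsConnected (A ∩ B)

def SetDecomposable {X : Type*} [TopologicalSpace X] (H : Set X) : Prop :=
  ∃ A B : Set X, IsSubcontinuum A ∧ IsSubcontinuum B ∧ A ⊂ H ∧ B ⊂ H ∧ A ∪ B = H

def IsTriod {X : Type*} [TopologicalSpace X] (T : Set X) : Prop :=
  IsSubcontinuum T ∧ ∃ Z : Set X, IsSubcontinuum Z ∧ Z ⊆ T ∧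
    ∃ x ∈ T \ Z, ∃ y ∈ T \ Z, ∃ z ∈ T \ Z,
      connectedComponentIn (T \ Z) x ≠ connectedComponentIn (T \ Z) y ∧
      connectedComponentIn (T \ Z) x ≠ connectedComponentIn (T \ Z) z ∧
      connectedComponentIn (T \ Z) y ≠ connectedComponentIn (T \ Z) z

def AlmostChainable (M : Type*) [MetricSpace M] : Prop :=
  ∀ ε : ℝ, 0 < ε → ∃ (G : Set (Set M)) (n : ℕ) (L : Fin (n + 1) → Set M),
    (∀ U ∈ G, IsOpen U ∧ Metric.diam U < ε) ∧ ⋃₀ G = Set.univ ∧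
    (∀ i, L i ∈ G) ∧
    (∀ i j, (L i ∩ L j).Nonempty ↔ |(i : ℤ) - (j : ℤ)| ≤ 1) ∧
    (∀ i : Fin (n + 1), (i : ℕ) < n → ∀ U ∈ G, U ∉ Set.range L → L i ∩ U = ∅) ∧
    (∀ x : M, ∃ i, ∃ y ∈ L i, dist x y ≤ ε)

def InverseLimit (Y : ℕ → Type*) [∀ n, TopologicalSpace (Y n)]
    (f : ∀ n, Y (n + 1) → Y n) : Set (∀ n, Y n) :=
  {x | ∀ n, f n (x (n + 1)) = x n}

def IsPolyhedron (Y : Type*) [TopologicalSpace Y] : Prop :=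
  ∃ (n : ℕ) (S : Finset (Finset (EuclideanSpace ℝ (Fin n)))),
    Nonempty (Y ≃ₜ ↥(⋃ s ∈ S, convexHull ℝ (s : Set (EuclideanSpace ℝ (Fin n)))))

def IsGraphSet {n : ℕ} (K : Set (EuclideanSpace ℝ (Fin n))) : Prop :=
  (∃ S : Finset (Finset (EuclideanSpace ℝ (Fin n))), (∀ s ∈ S, s.card ≤ 2) ∧
      K = ⋃ s ∈ S, convexHull ℝ (s : Set (EuclideanSpace ℝ (Fin n)))) ∧
  IsConnected K ∧ K.Nontrivial

def IsTreeSet {n : ℕ} (K : Set (EuclideanSpace ℝ (Fin n))) : Prop :=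
  IsGraphSet K ∧ ∀ A : Set (EuclideanSpace ℝ (Fin n)), A ⊆ K → ¬ Nonempty (A ≃ₜ Circle)

def IsBranchPoint (Y : Type*) [TopologicalSpace Y] (x : Y) : Prop :=
  ¬ ∀ V ∈ nhds x, ∃ U ∈ nhds x,
    U ⊆ V ∧ IsOpen U ∧ (frontier U).Finite ∧ (frontier U).ncard ≤ 2

def KJunctioned (X : Type*) [TopologicalSpace X] (k : ℕ) : Prop :=
  ∃ (m : ℕ → ℕ) (G : ∀ n : ℕ, Set (EuclideanSpace ℝ (Fin (m n))))
    (f : ∀ n : ℕ, ↥(G (n + 1)) → ↥(G n)),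
    (∀ n, IsGraphSet (G n)) ∧
    (∀ n, {x : ↥(G n) | IsBranchPoint (↥(G n)) x}.Finite ∧
      {x : ↥(G n) | IsBranchPoint (↥(G n)) x}.ncard ≤ k) ∧
    (∀ n, Continuous (f n) ∧ Function.Surjective (f n)) ∧
    Nonempty (X ≃ₜ ↥(InverseLimit (fun n => ↥(G n)) f))

def TreeLike (X : Type*) [MetricSpace X] : Prop :=
  ∀ ε : ℝ, 0 < ε → ∃ (m : ℕ) (T : Set (EuclideanSpace ℝ (Fin m))), IsTreeSet T ∧
    ∃ f : X → ↥T, Continuous f ∧ Function.Surjective f ∧ ∀ t, Metric.diam (f ⁻¹' {t}) < ε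

noncomputable def Span (X : Type*) [MetricSpace X] : ℝ :=
  sSup {σ : ℝ | 0 ≤ σ ∧ ∃ Z : Set (X × X), IsSubcontinuum Z ∧
    Prod.fst '' Z = Prod.snd '' Z ∧ ∀ p ∈ Z, σ ≤ dist p.1 p.2}


private lemma span_aux_no_shift {X : Type*} (Z : Set (X × X)) (hne : Z.Nonempty)
    (hproj : Prod.fst '' Z = Prod.snd '' Z) (g : X → ℤ) (N : ℤ)
    (hb : ∀ x, g x ≤ N) (hlt : ∀ z ∈ Z, g z.2 < g z.1) : False := by
  classical
  obtain ⟨z₀, hz₀⟩ := hne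
  obtain ⟨m, hm, hub⟩ := Int.exists_greatest_of_bdd
    (P := fun t => ∃ x ∈ Prod.fst '' Z, g x = t)
    ⟨N, fun t ht => by obtain ⟨x, -, hx⟩ := ht; exact hx ▸ hb x⟩
    ⟨g z₀.1, z₀.1, ⟨z₀, hz₀, rfl⟩, rfl⟩
  obtain ⟨x₀, hx₀mem, hx₀⟩ := hm
  rw [hproj] at hx₀mem
  obtain ⟨z₁, hz₁, hz₁2⟩ := hx₀mem
  have h1 : g z₁.1 ≤ m := hub _ ⟨z₁.1, ⟨z₁, hz₁, rfl⟩, rfl⟩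
  have h2 : g z₁.2 < g z₁.1 := hlt z₁ hz₁
  rw [hz₁2, hx₀] at h2
  omega

theorem stmt18 (X : Type*) [MetricSpace X] [CompactSpace X] [ConnectedSpace X]
    (hX : Chainable X) : Span X = 0 := by
  classical
  unfold Span
  set S : Set ℝ := {σ : ℝ | 0 ≤ σ ∧ ∃ Z : Set (X × X), IsSubcontinuum Z ∧
    Prod.fst '' Z = Prod.snd '' Z ∧ ∀ p ∈ Z, σ ≤ dist p.1 p.2} with hS
  have h0 : (0 : ℝ) ∈ S := by
    refine ⟨le_refl 0, Set.range (fun x => (x, x)), ⟨?_, ?_⟩, ?_, fun p _ => dist_nonneg⟩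
    · rw [← Set.image_univ]
      exact isCompact_univ.image (continuous_id.prodMk continuous_id)
    · rw [← Set.image_univ]
      exact isConnected_univ.image _ (continuous_id.prodMk continuous_id).continuousOn
    · rw [← Set.range_comp, ← Set.range_comp]
      rfl
  have hub : ∀ σ ∈ S, σ ≤ 0 := by
    intro σ hσ
    by_contra hpos
    push_neg at hpos
    obtain ⟨-, Z, ⟨hZc, hZconn⟩, hproj, hdist⟩ := hσ
    obtain ⟨n, C, hopen, hcov, hdiam, hchain⟩ := hX (σ/2) (by linarith)
    have hbdd : ∀ i, Bornology.IsBounded (C i) :=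
      fun i => (isCompact_univ.isBounded).subset (Set.subset_univ _)
    have hmem : ∀ x : X, ∃ i, x ∈ C i := by
      intro x
      have : x ∈ ⋃ i, C i := hcov ▸ Set.mem_univ x
      simpa using this
    have hgap : ∀ z ∈ Z, ∀ i j : Fin (n+1), z.1 ∈ C i → z.2 ∈ C j →
        ¬ (|(i:ℤ) - (j:ℤ)| ≤ 1) := by
      intro z hz i j hi hj habs
      obtain ⟨w, hwi, hwj⟩ := (hchain i j).mpr habs
      have d1 : dist z.1 w < σ/2 :=
        lt_of_le_of_lt (Metric.dist_le_diam_of_mem (hbdd i) hi hwi) (hdiam i)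
      have d2 : dist w z.2 < σ/2 :=
        lt_of_le_of_lt (Metric.dist_le_diam_of_mem (hbdd j) hwj hj) (hdiam j)
      have h3 := hdist z hz
      have h4 := dist_triangle z.1 w z.2
      linarith
    have hwin : ∀ (x : X) (i i' : Fin (n+1)), x ∈ C i → x ∈ C i' → |(i:ℤ) - (i':ℤ)| ≤ 1 :=
      fun x i i' hi hi' => (hchain i i').mp ⟨x, hi, hi'⟩
    set A' : Set (X × X) :=
      ⋃ (i : Fin (n+1)) (j : Fin (n+1)) (_ : (j:ℤ) + 2 ≤ (i:ℤ)), (C i) ×ˢ (C j) with hA'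
    set B' : Set (X × X) :=
      ⋃ (i : Fin (n+1)) (j : Fin (n+1)) (_ : (i:ℤ) + 2 ≤ (j:ℤ)), (C i) ×ˢ (C j) with hB'
    have hA'open : IsOpen A' :=
      isOpen_iUnion fun i => isOpen_iUnion fun j => isOpen_iUnion fun _ =>
        (hopen i).prod (hopen j)
    have hB'open : IsOpen B' :=
      isOpen_iUnion fun i => isOpen_iUnion fun j => isOpen_iUnion fun _ =>
        (hopen i).prod (hopen j)
    have hmemA' : ∀ z : X × X,
        z ∈ A' ↔ ∃ i j : Fin (n+1), z.1 ∈ C i ∧ z.2 ∈ C j ∧ (j:ℤ) + 2 ≤ (i:ℤ) := by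
      intro z
      simp only [hA', Set.mem_iUnion, Set.mem_prod]
      tauto
    have hmemB' : ∀ z : X × X,
        z ∈ B' ↔ ∃ i j : Fin (n+1), z.1 ∈ C i ∧ z.2 ∈ C j ∧ (i:ℤ) + 2 ≤ (j:ℤ) := by
      intro z
      simp only [hB', Set.mem_iUnion, Set.mem_prod]
      tauto
    have hcover : Z ⊆ A' ∪ B' := by
      intro z hz
      obtain ⟨i₀, hi₀⟩ := hmem z.1
      obtain ⟨j₀, hj₀⟩ := hmem z.2
      have hg := hgap z hz i₀ j₀ hi₀ hj₀
      rw [abs_le] at hg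
      rcases (by omega : (j₀:ℤ) + 2 ≤ (i₀:ℤ) ∨ (i₀:ℤ) + 2 ≤ (j₀:ℤ)) with h | h
      · exact Or.inl ((hmemA' z).mpr ⟨i₀, j₀, hi₀, hj₀, h⟩)
      · exact Or.inr ((hmemB' z).mpr ⟨i₀, j₀, hi₀, hj₀, h⟩)
    have hdisj : ∀ z ∈ Z, ¬ (z ∈ A' ∧ z ∈ B') := by
      rintro z hz ⟨hzA, hzB⟩
      obtain ⟨i₀, j₀, hi₀, hj₀, h₀⟩ := (hmemA' z).mp hzA
      obtain ⟨i₁, j₁, hi₁, hj₁, h₁⟩ := (hmemB' z).mp hzB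
      have w1 := hwin z.1 i₀ i₁ hi₀ hi₁
      have w2 := hwin z.2 j₀ j₁ hj₀ hj₁
      rw [abs_le] at w1 w2
      omega
    have hcase : Z ⊆ A' ∨ Z ⊆ B' := by
      by_contra hc
      push_neg at hc
      obtain ⟨h1, h2⟩ := hc
      obtain ⟨za, hza, hzaA⟩ := Set.not_subset.mp h1
      obtain ⟨zb, hzb, hzbB⟩ := Set.not_subset.mp h2
      have hne1 : (Z ∩ A').Nonempty := ⟨zb, hzb, (hcover hzb).resolve_right hzbB⟩
      have hne2 : (Z ∩ B').Nonempty := ⟨za, hza, (hcover hza).resolve_left hzaA⟩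
      obtain ⟨z, hzZ, hzA, hzB⟩ :=
        hZconn.isPreconnected A' B' hA'open hB'open hcover hne1 hne2
      exact hdisj z hzZ ⟨hzA, hzB⟩
    have hix : ∀ x : X, x ∈ C (hmem x).choose := fun x => (hmem x).choose_spec
    set ix : X → Fin (n+1) := fun x => (hmem x).choose with hixdef
    rcases hcase with hsub | hsub
    · refine span_aux_no_shift Z hZconn.nonempty hproj (fun x => ((ix x : ℕ) : ℤ)) n
        (fun x => by simpa using (show ((ix x : ℕ) : ℤ) ≤ (n:ℤ) by exact_mod_cast Fin.is_le (ix x))) ?_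
      intro z hz
      obtain ⟨i, j, hi, hj, h⟩ := (hmemA' z).mp (hsub hz)
      have w1 := hwin z.1 (ix z.1) i (hix z.1) hi
      have w2 := hwin z.2 (ix z.2) j (hix z.2) hj
      have hg := hgap z hz (ix z.1) (ix z.2) (hix z.1) (hix z.2)
      rw [abs_le] at w1 w2 hg
      omega
    · refine span_aux_no_shift Z hZconn.nonempty hproj (fun x => -((ix x : ℕ) : ℤ)) 0
        (fun x => by simp) ?_
      intro z hz
      obtain ⟨i, j, hi, hj, h⟩ := (hmemB' z).mp (hsub hz)
      have w1 := hwin z.1 (ix z.1) i (hix z.1) hi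
      have w2 := hwin z.2 (ix z.2) j (hix z.2) hj
      have hg := hgap z hz (ix z.1) (ix z.2) (hix z.1) (hix z.2)
      rw [abs_le] at w1 w2 hg
      omega
  exact le_antisymm (csSup_le ⟨0, h0⟩ hub) (le_csSup ⟨0, hub⟩ h0)
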